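/- arXiv:2008.07093 — 5 statements merged into one kernel-verified Lean document; each statement's English description precedes it below -/
import Mathlib

section
/- For any three probability measures μ₁, μ₂, μ₃ on a metric space, the square root of the variance satisfies the triangle inequality: √Var(μ₁,μ₃) ≤ √Var(μ₁,μ₂) + √Var(μ₂,μ₃). -/
open MeasureTheory

/-- The variance between two measures on a metric space:
`Var(μ,ν) := ∫∫ d²(x,y) dμ(x) dν(y)`, with values in `[0,∞]`. -/
noncomputable def pairVar {X : Type*} [MetricSpace X] [MeasurableSpace X]
    (μ ν : Measure X) : ENNReal :=
  ∫⁻ x, ∫⁻ y, ENNReal.ofReal (dist x y ^ 2) ∂ν ∂μ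

lemma ofReal_dist_sq {X : Type*} [MetricSpace X] (x y : X) :
    ENNReal.ofReal (dist x y ^ 2) = edist x y ^ (2 : ℝ) := by
  rw [edist_dist, ENNReal.ofReal_pow dist_nonneg, ← ENNReal.rpow_natCast]
  norm_num

lemma sq_rt (t : ENNReal) : (t ^ (1/2 : ℝ)) ^ (2 : ℝ) = t := by
  rw [← ENNReal.rpow_mul]; norm_num

lemma rt_sq (t : ENNReal) : (t ^ (2 : ℝ)) ^ (1/2 : ℝ) = t := by
  rw [← ENNReal.rpow_mul]; norm_num

/-- Minkowski-type inequality for a dominated function. -/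
lemma rt_le {α : Type*} [MeasurableSpace α] (ν : Measure α) (h f g : α → ENNReal)
    (hf : AEMeasurable f ν) (hg : AEMeasurable g ν) (hle : ∀ a, h a ≤ f a + g a) :
    (∫⁻ a, h a ^ (2 : ℝ) ∂ν) ^ (1/2 : ℝ) ≤
      (∫⁻ a, f a ^ (2 : ℝ) ∂ν) ^ (1/2 : ℝ) + (∫⁻ a, g a ^ (2 : ℝ) ∂ν) ^ (1/2 : ℝ) := by
  have h1 : (∫⁻ a, h a ^ (2 : ℝ) ∂ν) ≤ ∫⁻ a, (f + g) a ^ (2 : ℝ) ∂ν :=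
    lintegral_mono fun a => ENNReal.rpow_le_rpow (hle a) (by norm_num)
  exact le_trans (ENNReal.rpow_le_rpow h1 (by norm_num))
    (ENNReal.lintegral_Lp_add_le hf hg one_le_two)

/-- An everywhere-finite `ℝ≥0∞`-valued 1-Lipschitz-type function is measurable. -/
lemma meas_of_lip {X : Type*} [MetricSpace X] [MeasurableSpace X] [BorelSpace X]
    (a : X → ENNReal) (hfin : ∀ x, a x ≠ ⊤)
    (hlip : ∀ x x', a x ≤ edist x x' + a x') : Measurable a := by
  have key : LipschitzWith 1 fun x => (a x).toReal := by
    refine LipschitzWith.of_dist_le_mul fun x y => ?_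
    rw [NNReal.coe_one, one_mul, Real.dist_eq, abs_sub_le_iff]
    have aux : ∀ u v : X, (a u).toReal - (a v).toReal ≤ dist u v := by
      intro u v
      have h := hlip u v
      have h2 : (a u).toReal ≤ (edist u v + a v).toReal :=
        ENNReal.toReal_mono (by simp [ENNReal.add_ne_top, edist_ne_top, hfin v]) h
      rw [ENNReal.toReal_add (edist_ne_top u v) (hfin v), edist_dist,
        ENNReal.toReal_ofReal dist_nonneg] at h2
      linarith
    exact ⟨aux x y, by rw [dist_comm]; exact aux y x⟩
  have : a = fun x => ENNReal.ofReal ((a x).toReal) :=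
    funext fun x => (ENNReal.ofReal_toReal (hfin x)).symm
  rw [this]
  exact key.continuous.measurable.ennreal_ofReal

lemma lintegral_const_prob {α : Type*} [MeasurableSpace α] (ν : Measure α)
    [IsProbabilityMeasure ν] (C : ENNReal) : ∫⁻ _, C ∂ν = C := by
  simp [lintegral_const]

/-- Triangle inequality for the square root of the variance. -/
theorem sqrt_var_triangle {X : Type*} [MetricSpace X] [MeasurableSpace X] [BorelSpace X]
    (μ₁ μ₂ μ₃ : Measure X) [IsProbabilityMeasure μ₁] [IsProbabilityMeasure μ₂]
    [IsProbabilityMeasure μ₃] :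
    (pairVar μ₁ μ₃) ^ (1/2 : ℝ) ≤ (pairVar μ₁ μ₂) ^ (1/2 : ℝ) + (pairVar μ₂ μ₃) ^ (1/2 : ℝ) := by
  classical
  -- rewrite pairVar with edist
  have pv : ∀ (μ ν : Measure X), pairVar μ ν = ∫⁻ x, ∫⁻ y, edist x y ^ (2 : ℝ) ∂ν ∂μ := by
    intro μ ν
    unfold pairVar
    simp only [ofReal_dist_sq]
  set a : X → ENNReal := fun x => (∫⁻ y, edist x y ^ (2 : ℝ) ∂μ₂) ^ (1/2 : ℝ) with ha
  set k : X → ENNReal := fun y => (∫⁻ z, edist y z ^ (2 : ℝ) ∂μ₃) ^ (1/2 : ℝ) with hk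
  set c : X → ENNReal := fun x => (∫⁻ z, edist x z ^ (2 : ℝ) ∂μ₃) ^ (1/2 : ℝ) with hc
  have edist_meas : ∀ x : X, Measurable fun y => edist x y :=
    fun x => (continuous_const.edist continuous_id).measurable
  have rt_const : ∀ (ν : Measure X) [IsProbabilityMeasure ν] (C : ENNReal),
      (∫⁻ _, C ^ (2 : ℝ) ∂ν) ^ (1/2 : ℝ) = C := by
    intro ν _ C
    rw [lintegral_const_prob, rt_sq]
  -- Lipschitz-type estimates
  have alip : ∀ x x', a x ≤ edist x x' + a x' := by
    intro x x'
    have := rt_le μ₂ (fun y => edist x y) (fun _ => edist x x') (fun y => edist x' y)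
      aemeasurable_const (edist_meas x').aemeasurable
      (fun y => edist_triangle x x' y)
    rwa [rt_const μ₂ (edist x x')] at this
  have klip : ∀ y y', k y ≤ edist y y' + k y' := by
    intro y y'
    have := rt_le μ₃ (fun z => edist y z) (fun _ => edist y y') (fun z => edist y' z)
      aemeasurable_const (edist_meas y').aemeasurable
      (fun z => edist_triangle y y' z)
    rwa [rt_const μ₃ (edist y y')] at this
  have cak : ∀ x y, c x ≤ edist x y + k y := by
    intro x y
    have := rt_le μ₃ (fun z => edist x z) (fun _ => edist x y) (fun z => edist y z)
      aemeasurable_const (edist_meas y).aemeasurable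
      (fun z => edist_triangle x y z)
    rwa [rt_const μ₃ (edist x y)] at this
  -- pairVar identities
  have h12 : pairVar μ₁ μ₂ = ∫⁻ x, a x ^ (2 : ℝ) ∂μ₁ := by
    rw [pv]; exact lintegral_congr fun x => (sq_rt _).symm
  have h23 : pairVar μ₂ μ₃ = ∫⁻ y, k y ^ (2 : ℝ) ∂μ₂ := by
    rw [pv]; exact lintegral_congr fun y => (sq_rt _).symm
  have h13 : pairVar μ₁ μ₃ = ∫⁻ x, c x ^ (2 : ℝ) ∂μ₁ := by
    rw [pv]; exact lintegral_congr fun x => (sq_rt _).symm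
  -- degenerate cases
  by_cases hA : ∃ x, a x = ⊤
  · obtain ⟨x₀, hx₀⟩ := hA
    have hall : ∀ x, a x = ⊤ := by
      intro x
      by_contra hne
      have := alip x₀ x
      rw [hx₀] at this
      exact (ENNReal.add_ne_top.2 ⟨edist_ne_top x₀ x, hne⟩) (top_le_iff.mp this)
    have : pairVar μ₁ μ₂ = ⊤ := by
      rw [h12]
      have : ∀ x, a x ^ (2 : ℝ) = ⊤ := fun x => by
        rw [hall x]; exact ENNReal.top_rpow_of_pos (by norm_num)
      simp only [this]
      simp [lintegral_const]
    rw [this, ENNReal.top_rpow_of_pos (by norm_num), top_add]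
    exact le_top
  by_cases hK : ∃ y, k y = ⊤
  · obtain ⟨y₀, hy₀⟩ := hK
    have hall : ∀ y, k y = ⊤ := by
      intro y
      by_contra hne
      have := klip y₀ y
      rw [hy₀] at this
      exact (ENNReal.add_ne_top.2 ⟨edist_ne_top y₀ y, hne⟩) (top_le_iff.mp this)
    have : pairVar μ₂ μ₃ = ⊤ := by
      rw [h23]
      have : ∀ y, k y ^ (2 : ℝ) = ⊤ := fun y => by
        rw [hall y]; exact ENNReal.top_rpow_of_pos (by norm_num)
      simp only [this]
      simp [lintegral_const]
    rw [this, ENNReal.top_rpow_of_pos (by norm_num), add_top]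
    exact le_top
  push_neg at hA hK
  have ameas : Measurable a := meas_of_lip a hA alip
  have kmeas : Measurable k := meas_of_lip k hK klip
  set K : ENNReal := (∫⁻ y, k y ^ (2 : ℝ) ∂μ₂) ^ (1/2 : ℝ) with hKdef
  -- c x ≤ a x + K
  have cK : ∀ x, c x ≤ a x + K := by
    intro x
    have := rt_le μ₂ (fun _ => c x) (fun y => edist x y) k
      (edist_meas x).aemeasurable kmeas.aemeasurable (cak x)
    rwa [rt_const μ₂ (c x)] at this
  -- final Minkowski
  have final := rt_le μ₁ c a (fun _ => K) ameas.aemeasurable aemeasurable_const cK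
  rw [rt_const μ₁ K] at final
  rw [h13, h12, h23]
  exact final
end

section
/- For any two probability measures μ₁, μ₂ on a metric space with finite self-variances, √Var(μ₁,μ₂) ≤ d_{W₁}(μ₁,μ₂) + √Var(μ₁) + √Var(μ₂), where Var(μ) := Var(μ,μ). -/
open MeasureTheory

/-- The `W₁`-Wasserstein distance, defined via Kantorovich duality as the supremum of
`∫ f dμ₁ − ∫ f dμ₂` over all bounded `1`-Lipschitz functions `f`. -/
noncomputable def dW1 {X : Type*} [MetricSpace X] [MeasurableSpace X]
    (μ₁ μ₂ : Measure X) : ENNReal :=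
  ⨆ f : {f : X → ℝ // LipschitzWith 1 f ∧ ∃ C, ∀ x, |f x| ≤ C},
    ENNReal.ofReal (∫ x, (f : X → ℝ) x ∂μ₁ - ∫ x, (f : X → ℝ) x ∂μ₂)

open scoped ENNReal

set_option linter.unusedSectionVars false

section AuxVar

variable {X : Type*} [MetricSpace X] [MeasurableSpace X] [BorelSpace X]

/-- `auxG ν y = ∫ d(x,y)² dν(x)` as an `ℝ≥0∞`-valued integral. -/
noncomputable def auxG (ν : Measure X) (y : X) : ℝ≥0∞ :=
  ∫⁻ x, ENNReal.ofReal (dist x y ^ 2) ∂ν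

/-- `auxF ν y = √(∫ d(x,y)² dν(x))`, the `L²(ν)` norm of `dist (·, y)`. -/
noncomputable def auxF (ν : Measure X) (y : X) : ℝ := Real.sqrt ((auxG ν y).toReal)

lemma auxF_nonneg (ν : Measure X) (y : X) : 0 ≤ auxF ν y := Real.sqrt_nonneg _

lemma cont_dist (y : X) : Continuous fun x : X => dist x y :=
  continuous_id.dist continuous_const

lemma meas_ofReal_dist_sq (y : X) :
    Measurable fun x : X => ENNReal.ofReal (dist x y ^ 2) :=
  (((cont_dist y).pow 2).measurable).ennreal_ofReal

lemma pairVar_eq (μ ν : Measure X) : pairVar μ ν = ∫⁻ x, auxG ν x ∂μ := by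
  refine lintegral_congr fun x => lintegral_congr fun y => ?_
  rw [dist_comm]

/-- key pointwise bound on `auxG`. -/
lemma auxG_le (ν : Measure X) [IsProbabilityMeasure ν] (z y : X) :
    auxG ν y ≤ 2 * auxG ν z + 2 * ENNReal.ofReal (dist z y ^ 2) := by
  have hpt : ∀ x : X, ENNReal.ofReal (dist x y ^ 2)
      ≤ 2 * ENNReal.ofReal (dist x z ^ 2) + 2 * ENNReal.ofReal (dist z y ^ 2) := by
    intro x
    have h1 : dist x y ^ 2 ≤ 2 * dist x z ^ 2 + 2 * dist z y ^ 2 := by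
      have ht := dist_triangle x z y
      have h2 : dist x y ^ 2 ≤ (dist x z + dist z y) ^ 2 := by
        nlinarith [dist_nonneg (x := x) (y := z), dist_nonneg (x := z) (y := y),
          dist_nonneg (x := x) (y := y)]
      nlinarith [sq_nonneg (dist x z - dist z y)]
    calc ENNReal.ofReal (dist x y ^ 2)
        ≤ ENNReal.ofReal (2 * dist x z ^ 2 + 2 * dist z y ^ 2) :=
          ENNReal.ofReal_le_ofReal h1
      _ = 2 * ENNReal.ofReal (dist x z ^ 2) + 2 * ENNReal.ofReal (dist z y ^ 2) := by
          rw [ENNReal.ofReal_add (by positivity) (by positivity),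
            ENNReal.ofReal_mul (by norm_num), ENNReal.ofReal_mul (by norm_num)]
          norm_num
  calc auxG ν y ≤ ∫⁻ x, (2 * ENNReal.ofReal (dist x z ^ 2)
        + 2 * ENNReal.ofReal (dist z y ^ 2)) ∂ν := lintegral_mono hpt
    _ = 2 * auxG ν z + 2 * ENNReal.ofReal (dist z y ^ 2) := by
        rw [lintegral_add_right _ measurable_const, lintegral_const_mul _ (meas_ofReal_dist_sq z),
          lintegral_const, measure_univ, mul_one]
        rfl

lemma exists_auxG_ne_top (ν : Measure X) [IsProbabilityMeasure ν]
    (h : pairVar ν ν ≠ ⊤) : ∃ z, auxG ν z ≠ ⊤ := by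
  by_contra hc
  push_neg at hc
  apply h
  rw [pairVar_eq]
  have : ∫⁻ x, auxG ν x ∂ν = ∫⁻ _ : X, (⊤ : ℝ≥0∞) ∂ν :=
    lintegral_congr fun x => hc x
  rw [this, lintegral_const, measure_univ, mul_one]

lemma auxG_ne_top (ν : Measure X) [IsProbabilityMeasure ν]
    (h : pairVar ν ν ≠ ⊤) (y : X) : auxG ν y ≠ ⊤ := by
  obtain ⟨z, hz⟩ := exists_auxG_ne_top ν h
  have := auxG_le ν z y
  intro htop
  rw [htop] at this
  have : (2 * auxG ν z + 2 * ENNReal.ofReal (dist z y ^ 2)) ≠ ⊤ := by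
    apply ENNReal.add_ne_top.2
    constructor
    · exact ENNReal.mul_ne_top (by norm_num) hz
    · exact ENNReal.mul_ne_top (by norm_num) ENNReal.ofReal_ne_top
  exact this (top_le_iff.mp ‹(⊤ : ℝ≥0∞) ≤ _›)

lemma eLpNorm_dist_eq (ν : Measure X) (y : X) :
    eLpNorm (fun x => dist x y) 2 ν = auxG ν y ^ (1/2 : ℝ) := by
  rw [eLpNorm_eq_lintegral_rpow_enorm_toReal (two_ne_zero) ENNReal.ofNat_ne_top]
  simp only [ENNReal.toReal_ofNat]
  congr 1
  refine lintegral_congr fun x => ?_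
  rw [Real.enorm_eq_ofReal dist_nonneg,
    ENNReal.ofReal_rpow_of_nonneg dist_nonneg (by norm_num)]
  norm_num

lemma auxF_eq_toReal_rpow (ν : Measure X) (y : X) :
    auxF ν y = (auxG ν y ^ (1/2 : ℝ)).toReal := by
  rw [auxF, Real.sqrt_eq_rpow, ENNReal.toReal_rpow]

lemma auxF_le_add_dist (ν : Measure X) [IsProbabilityMeasure ν]
    (hfin : ∀ y, auxG ν y ≠ ⊤) (y y' : X) :
    auxF ν y ≤ auxF ν y' + dist y y' := by
  have hν0 : ν ≠ 0 := by
    intro h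
    have h1 := measure_univ (μ := ν)
    rw [h] at h1; simp at h1
  have key : auxG ν y ^ (1/2 : ℝ) ≤ auxG ν y' ^ (1/2 : ℝ) + ENNReal.ofReal (dist y y') := by
    rw [← eLpNorm_dist_eq, ← eLpNorm_dist_eq]
    calc eLpNorm (fun x => dist x y) 2 ν
        ≤ eLpNorm ((fun x => dist x y') + (fun _ => dist y y')) 2 ν := by
          apply eLpNorm_mono
          intro x
          simp only [Pi.add_apply, Real.norm_eq_abs]
          rw [abs_of_nonneg dist_nonneg, abs_of_nonneg (by positivity)]
          have := dist_triangle x y' y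
          have := dist_comm y y'
          linarith
      _ ≤ eLpNorm (fun x => dist x y') 2 ν + eLpNorm (fun _ : X => dist y y') 2 ν :=
          eLpNorm_add_le ((cont_dist y').aestronglyMeasurable) aestronglyMeasurable_const
            one_le_two
      _ = eLpNorm (fun x => dist x y') 2 ν + ENNReal.ofReal (dist y y') := by
          rw [eLpNorm_const _ two_ne_zero hν0]
          rw [measure_univ, ENNReal.one_rpow, mul_one, Real.enorm_eq_ofReal dist_nonneg]
  have hne : auxG ν y' ^ (1/2 : ℝ) + ENNReal.ofReal (dist y y') ≠ ⊤ :=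
    ENNReal.add_ne_top.2 ⟨ENNReal.rpow_ne_top_of_nonneg (by norm_num) (hfin y'),
      ENNReal.ofReal_ne_top⟩
  have := ENNReal.toReal_mono hne key
  rw [ENNReal.toReal_add (ENNReal.rpow_ne_top_of_nonneg (by norm_num) (hfin y'))
    ENNReal.ofReal_ne_top, ENNReal.toReal_ofReal dist_nonneg] at this
  rw [auxF_eq_toReal_rpow, auxF_eq_toReal_rpow]
  exact this

lemma lipschitz_auxF (ν : Measure X) [IsProbabilityMeasure ν]
    (hfin : ∀ y, auxG ν y ≠ ⊤) : LipschitzWith 1 (auxF ν) := by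
  apply LipschitzWith.of_dist_le_mul
  intro y y'
  rw [NNReal.coe_one, one_mul, Real.dist_eq]
  rw [abs_sub_le_iff]
  constructor
  · have := auxF_le_add_dist ν hfin y y'
    linarith
  · have := auxF_le_add_dist ν hfin y' y
    rw [dist_comm] at this
    linarith

lemma auxF_sq (ν : Measure X) (y : X) : auxF ν y ^ 2 = (auxG ν y).toReal :=
  Real.sq_sqrt ENNReal.toReal_nonneg

lemma measurable_auxG (ν : Measure X) [IsProbabilityMeasure ν]
    (hfin : ∀ y, auxG ν y ≠ ⊤) : Measurable (auxG ν) := by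
  have : auxG ν = fun y => ENNReal.ofReal (auxF ν y ^ 2) := by
    funext y
    rw [auxF_sq, ENNReal.ofReal_toReal (hfin y)]
  rw [this]
  exact ((((lipschitz_auxF ν hfin).continuous).pow 2).measurable).ennreal_ofReal

/-- CS-type inequality. -/
lemma sq_integral_le {α : Type*} [MeasurableSpace α] (ρ : Measure α) [IsProbabilityMeasure ρ]
    {f : α → ℝ} (hf : Integrable f ρ) (hf2 : Integrable (fun x => f x ^ 2) ρ) :
    (∫ x, f x ∂ρ) ^ 2 ≤ ∫ x, f x ^ 2 ∂ρ := by
  set m := ∫ x, f x ∂ρ with hm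
  have h0 : 0 ≤ ∫ x, (f x - m) ^ 2 ∂ρ := integral_nonneg fun x => sq_nonneg _
  have hrw : (fun x => (f x - m) ^ 2) = fun x => (f x ^ 2 - (2 * m) * f x) + m ^ 2 := by
    funext x; ring
  have hint1 : Integrable (fun x => f x ^ 2 - (2 * m) * f x) ρ := hf2.sub (hf.const_mul _)
  rw [hrw, integral_add hint1 (integrable_const _),
    integral_sub hf2 (hf.const_mul (2 * m)), integral_const_mul, integral_const,
    probReal_univ] at h0
  simp only [ENNReal.toReal_one, one_smul, smul_eq_mul] at h0
  nlinarith [h0]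

end AuxVar

section AuxVar2

variable {X : Type*} [MetricSpace X] [MeasurableSpace X] [BorelSpace X]

lemma integrable_dist_sq (ν : Measure X) [IsProbabilityMeasure ν] (y : X)
    (h : auxG ν y ≠ ⊤) :
    Integrable (fun x => dist x y ^ 2) ν ∧ ∫ x, dist x y ^ 2 ∂ν = (auxG ν y).toReal := by
  have heq : (fun x : X => dist x y ^ 2)
      = fun x => (ENNReal.ofReal (dist x y ^ 2)).toReal :=
    funext fun x => (ENNReal.toReal_ofReal (by positivity)).symm
  constructor
  · rw [heq]
    exact integrable_toReal_of_lintegral_ne_top ((meas_ofReal_dist_sq y).aemeasurable) h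
  · rw [heq]
    exact integral_toReal ((meas_ofReal_dist_sq y).aemeasurable)
      (Filter.Eventually.of_forall fun x => ENNReal.ofReal_lt_top)

lemma integrable_dist (ν : Measure X) [IsProbabilityMeasure ν] (y : X)
    (h : auxG ν y ≠ ⊤) : Integrable (fun x => dist x y) ν := by
  refine Integrable.mono ((integrable_const 1).add (integrable_dist_sq ν y h).1)
    (cont_dist y).aestronglyMeasurable (Filter.Eventually.of_forall fun x => ?_)
  simp only [Real.norm_eq_abs, Pi.add_apply]
  rw [abs_of_nonneg dist_nonneg, abs_of_nonneg (by positivity)]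
  nlinarith [dist_nonneg (x := x) (y := y)]

lemma int_dist_le_auxF (ν : Measure X) [IsProbabilityMeasure ν] (y : X)
    (h : auxG ν y ≠ ⊤) : ∫ x, dist x y ∂ν ≤ auxF ν y := by
  have hsq := sq_integral_le ν (integrable_dist ν y h) (integrable_dist_sq ν y h).1
  rw [(integrable_dist_sq ν y h).2] at hsq
  have h0 : 0 ≤ ∫ x, dist x y ∂ν := integral_nonneg fun x => dist_nonneg
  calc ∫ x, dist x y ∂ν = Real.sqrt ((∫ x, dist x y ∂ν) ^ 2) := (Real.sqrt_sq h0).symm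
    _ ≤ Real.sqrt ((auxG ν y).toReal) := Real.sqrt_le_sqrt hsq
    _ = auxF ν y := rfl

lemma integrable_auxF_sq (ν ρ : Measure X) [IsProbabilityMeasure ν] [IsProbabilityMeasure ρ]
    (hfin : ∀ y, auxG ν y ≠ ⊤) (hI : ∫⁻ y, auxG ν y ∂ρ ≠ ⊤) :
    Integrable (fun y => auxF ν y ^ 2) ρ
      ∧ ∫ y, auxF ν y ^ 2 ∂ρ = (∫⁻ y, auxG ν y ∂ρ).toReal := by
  have heq : (fun y => auxF ν y ^ 2) = fun y => (auxG ν y).toReal := funext (auxF_sq ν)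
  constructor
  · rw [heq]
    exact integrable_toReal_of_lintegral_ne_top ((measurable_auxG ν hfin).aemeasurable) hI
  · rw [heq]
    exact integral_toReal ((measurable_auxG ν hfin).aemeasurable)
      (Filter.Eventually.of_forall fun y => lt_top_iff_ne_top.2 (hfin y))

lemma integrable_auxF (ν ρ : Measure X) [IsProbabilityMeasure ν] [IsProbabilityMeasure ρ]
    (hfin : ∀ y, auxG ν y ≠ ⊤) (hI : ∫⁻ y, auxG ν y ∂ρ ≠ ⊤) :
    Integrable (auxF ν) ρ := by
  refine Integrable.mono ((integrable_const 1).add (integrable_auxF_sq ν ρ hfin hI).1)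
    ((lipschitz_auxF ν hfin).continuous).aestronglyMeasurable
    (Filter.Eventually.of_forall fun y => ?_)
  simp only [Real.norm_eq_abs, Pi.add_apply]
  rw [abs_of_nonneg (auxF_nonneg ν y), abs_of_nonneg (by nlinarith [sq_nonneg (auxF ν y)])]
  nlinarith [auxF_nonneg ν y, sq_nonneg (auxF ν y - 1)]

end AuxVar2

set_option maxHeartbeats 1000000 in
/-- If the self-variances are finite, then
`√Var(μ₁,μ₂) ≤ d_{W₁}(μ₁,μ₂) + √Var(μ₁) + √Var(μ₂)`. -/
theorem sqrt_var_le_dW1_add {X : Type*} [MetricSpace X] [MeasurableSpace X] [BorelSpace X]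
    (μ₁ μ₂ : Measure X) [IsProbabilityMeasure μ₁] [IsProbabilityMeasure μ₂]
    (h₁ : pairVar μ₁ μ₁ < ⊤) (h₂ : pairVar μ₂ μ₂ < ⊤) :
    (pairVar μ₁ μ₂) ^ (1/2 : ℝ) ≤
      dW1 μ₁ μ₂ + (pairVar μ₁ μ₁) ^ (1/2 : ℝ) + (pairVar μ₂ μ₂) ^ (1/2 : ℝ) := by
  by_cases hW : dW1 μ₁ μ₂ = ⊤
  · rw [hW]
    simp [top_add]
  have h₁' : pairVar μ₁ μ₁ ≠ ⊤ := h₁.ne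
  have h₂' : pairVar μ₂ μ₂ ≠ ⊤ := h₂.ne
  have hfin₁ : ∀ y, auxG μ₁ y ≠ ⊤ := auxG_ne_top μ₁ h₁'
  have hfin₂ : ∀ y, auxG μ₂ y ≠ ⊤ := auxG_ne_top μ₂ h₂'
  -- finiteness of the mixed variance
  obtain ⟨z, hz⟩ := exists_auxG_ne_top μ₂ h₂'
  have h₁₂ : pairVar μ₁ μ₂ ≠ ⊤ := by
    rw [pairVar_eq]
    have hb : ∫⁻ x, auxG μ₂ x ∂μ₁ ≤ 2 * auxG μ₂ z + 2 * auxG μ₁ z := by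
      calc ∫⁻ x, auxG μ₂ x ∂μ₁
          ≤ ∫⁻ x, (2 * auxG μ₂ z + 2 * ENNReal.ofReal (dist z x ^ 2)) ∂μ₁ :=
            lintegral_mono fun x => auxG_le μ₂ z x
        _ = 2 * auxG μ₂ z + 2 * auxG μ₁ z := by
            rw [lintegral_add_left measurable_const, lintegral_const, measure_univ, mul_one,
              lintegral_const_mul _ (by
                have : Measurable fun x : X => ENNReal.ofReal (dist x z ^ 2) :=
                  meas_ofReal_dist_sq z
                simpa [dist_comm] using this)]
            congr 1
            congr 1
            exact lintegral_congr fun x => by rw [dist_comm]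
    intro htop
    rw [htop] at hb
    exact (ENNReal.add_ne_top.2 ⟨ENNReal.mul_ne_top (by norm_num) hz,
      ENNReal.mul_ne_top (by norm_num) (hfin₁ z)⟩) (top_le_iff.mp hb)
  -- lintegral finiteness in the right forms
  have hI21 : ∫⁻ x, auxG μ₂ x ∂μ₁ ≠ ⊤ := by rw [← pairVar_eq]; exact h₁₂
  have hI22 : ∫⁻ x, auxG μ₂ x ∂μ₂ ≠ ⊤ := by rw [← pairVar_eq]; exact h₂'
  have hI11 : ∫⁻ x, auxG μ₁ x ∂μ₁ ≠ ⊤ := by rw [← pairVar_eq]; exact h₁'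
  -- integrability
  have intF2sq_1 := integrable_auxF_sq μ₂ μ₁ hfin₂ hI21
  have intF2_1 := integrable_auxF μ₂ μ₁ hfin₂ hI21
  have intF2sq_2 := integrable_auxF_sq μ₂ μ₂ hfin₂ hI22
  have intF2_2 := integrable_auxF μ₂ μ₂ hfin₂ hI22
  have intF1sq_1 := integrable_auxF_sq μ₁ μ₁ hfin₁ hI11
  have intF1_1 := integrable_auxF μ₁ μ₁ hfin₁ hI11
  set V₁ : ℝ := (pairVar μ₁ μ₁).toReal with hV₁
  set V₂ : ℝ := (pairVar μ₂ μ₂).toReal with hV₂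
  set W : ℝ := (dW1 μ₁ μ₂).toReal with hWdef
  have hW0 : 0 ≤ W := ENNReal.toReal_nonneg
  set m : ℝ := ∫ x, auxF μ₂ x ∂μ₁ with hmdef
  have hm0 : 0 ≤ m := integral_nonneg fun x => auxF_nonneg _ _
  have hV₁eq : ∫ x, auxF μ₁ x ^ 2 ∂μ₁ = V₁ := by
    rw [intF1sq_1.2, hV₁, pairVar_eq]
  have hV₂eq : ∫ y, auxF μ₂ y ^ 2 ∂μ₂ = V₂ := by
    rw [intF2sq_2.2, hV₂, pairVar_eq]
  have hSeq : ∫ x, auxF μ₂ x ^ 2 ∂μ₁ = (pairVar μ₁ μ₂).toReal := by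
    rw [intF2sq_1.2, pairVar_eq]
  -- Cauchy–Schwarz bounds
  have hCS1 : ∫ x, auxF μ₁ x ∂μ₁ ≤ Real.sqrt V₁ := by
    have h := sq_integral_le μ₁ intF1_1 intF1sq_1.1
    rw [hV₁eq] at h
    have h0 : 0 ≤ ∫ x, auxF μ₁ x ∂μ₁ := integral_nonneg fun x => auxF_nonneg _ _
    calc ∫ x, auxF μ₁ x ∂μ₁ = Real.sqrt ((∫ x, auxF μ₁ x ∂μ₁) ^ 2) := (Real.sqrt_sq h0).symm
      _ ≤ Real.sqrt V₁ := Real.sqrt_le_sqrt h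
  have hCS2 : ∫ y, auxF μ₂ y ∂μ₂ ≤ Real.sqrt V₂ := by
    have h := sq_integral_le μ₂ intF2_2 intF2sq_2.1
    rw [hV₂eq] at h
    have h0 : 0 ≤ ∫ y, auxF μ₂ y ∂μ₂ := integral_nonneg fun x => auxF_nonneg _ _
    calc ∫ y, auxF μ₂ y ∂μ₂ = Real.sqrt ((∫ y, auxF μ₂ y ∂μ₂) ^ 2) := (Real.sqrt_sq h0).symm
      _ ≤ Real.sqrt V₂ := Real.sqrt_le_sqrt h
  -- truncation: m ≤ W + ∫ auxF μ₂ dμ₂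
  have key : ∀ n : ℕ, ∫ x, min (auxF μ₂ x) n ∂μ₁ ≤ W + ∫ y, auxF μ₂ y ∂μ₂ := by
    intro n
    have hlip : LipschitzWith 1 fun x => min (auxF μ₂ x) (n : ℝ) := by
      have := (lipschitz_auxF μ₂ hfin₂).min (LipschitzWith.const (n : ℝ))
      simpa using this
    have hbd : ∀ x, |min (auxF μ₂ x) (n : ℝ)| ≤ (n : ℝ) := fun x => by
      rw [abs_of_nonneg (le_min (auxF_nonneg _ _) (Nat.cast_nonneg n))]
      exact min_le_right _ _
    have hle : ENNReal.ofReal ((∫ x, min (auxF μ₂ x) (n : ℝ) ∂μ₁)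
        - ∫ x, min (auxF μ₂ x) (n : ℝ) ∂μ₂) ≤ dW1 μ₁ μ₂ :=
      le_iSup (fun f : {f : X → ℝ // LipschitzWith 1 f ∧ ∃ C, ∀ x, |f x| ≤ C} =>
        ENNReal.ofReal (∫ x, (f : X → ℝ) x ∂μ₁ - ∫ x, (f : X → ℝ) x ∂μ₂))
        ⟨fun x => min (auxF μ₂ x) (n : ℝ), hlip, ⟨(n : ℝ), hbd⟩⟩
    have hmono_norm : ∀ x, ‖min (auxF μ₂ x) (n : ℝ)‖ ≤ ‖auxF μ₂ x‖ := fun x => by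
      simp only [Real.norm_eq_abs]
      rw [abs_of_nonneg (le_min (auxF_nonneg _ _) (Nat.cast_nonneg n)),
        abs_of_nonneg (auxF_nonneg _ _)]
      exact min_le_left _ _
    have hcont : Continuous fun x => min (auxF μ₂ x) (n : ℝ) := hlip.continuous
    have hg1 : Integrable (fun x => min (auxF μ₂ x) (n : ℝ)) μ₁ :=
      intF2_1.mono hcont.aestronglyMeasurable (Filter.Eventually.of_forall hmono_norm)
    have hg2 : Integrable (fun x => min (auxF μ₂ x) (n : ℝ)) μ₂ :=
      intF2_2.mono hcont.aestronglyMeasurable (Filter.Eventually.of_forall hmono_norm)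
    have hreal : (∫ x, min (auxF μ₂ x) (n : ℝ) ∂μ₁)
        - ∫ x, min (auxF μ₂ x) (n : ℝ) ∂μ₂ ≤ W := by
      rcases le_or_gt ((∫ x, min (auxF μ₂ x) (n : ℝ) ∂μ₁)
        - ∫ x, min (auxF μ₂ x) (n : ℝ) ∂μ₂) 0 with h | h
      · linarith
      · have := ENNReal.toReal_mono hW hle
        rwa [ENNReal.toReal_ofReal h.le] at this
    have h2 : ∫ x, min (auxF μ₂ x) (n : ℝ) ∂μ₂ ≤ ∫ y, auxF μ₂ y ∂μ₂ :=
      integral_mono hg2 intF2_2 fun x => min_le_left _ _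
    linarith
  have htend : Filter.Tendsto (fun n : ℕ => ∫ x, min (auxF μ₂ x) (n : ℝ) ∂μ₁)
      Filter.atTop (nhds m) := by
    refine tendsto_integral_of_dominated_convergence (auxF μ₂)
      (fun n => ?_) intF2_1 (fun n => Filter.Eventually.of_forall fun x => ?_)
      (Filter.Eventually.of_forall fun x => ?_)
    · exact (((lipschitz_auxF μ₂ hfin₂).continuous).min continuous_const).aestronglyMeasurable
    · simp only [Real.norm_eq_abs]
      rw [abs_of_nonneg (le_min (auxF_nonneg _ _) (Nat.cast_nonneg n))]
      exact min_le_left _ _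
    · refine Filter.Tendsto.congr' ?_ tendsto_const_nhds
      filter_upwards [Filter.eventually_ge_atTop ⌈auxF μ₂ x⌉₊] with n hn
      have : auxF μ₂ x ≤ (n : ℝ) := le_trans (Nat.le_ceil _) (Nat.cast_le.2 hn)
      rw [min_eq_left this]
  have htrunc : m ≤ W + ∫ y, auxF μ₂ y ∂μ₂ :=
    le_of_tendsto htend (Filter.Eventually.of_forall key)
  -- pointwise bound auxF μ₂ ≤ m + auxF μ₁
  have hpoint : ∀ x, auxF μ₂ x ≤ m + auxF μ₁ x := by
    intro x
    have h1 : auxF μ₂ x = ∫ _x' , auxF μ₂ x ∂μ₁ := by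
      rw [integral_const, probReal_univ]; simp
    have h2 : (∫ _x', auxF μ₂ x ∂μ₁ : ℝ) ≤ ∫ x', (auxF μ₂ x' + dist x' x) ∂μ₁ := by
      refine integral_mono (integrable_const _)
        (intF2_1.add (integrable_dist μ₁ x (hfin₁ x))) fun x' => ?_
      have := auxF_le_add_dist μ₂ hfin₂ x x'
      rw [dist_comm] at this
      linarith
    have h3 : ∫ x', (auxF μ₂ x' + dist x' x) ∂μ₁ = m + ∫ x', dist x' x ∂μ₁ :=
      integral_add intF2_1 (integrable_dist μ₁ x (hfin₁ x))
    have h4 : ∫ x', dist x' x ∂μ₁ ≤ auxF μ₁ x := int_dist_le_auxF μ₁ x (hfin₁ x)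
    linarith
  -- main quadratic bound
  have hexp_int : Integrable (fun x => (m + auxF μ₁ x) ^ 2) μ₁ := by
    have heq : (fun x => (m + auxF μ₁ x) ^ 2)
        = fun x => (m ^ 2 + auxF μ₁ x ^ 2) + (2 * m) * auxF μ₁ x := funext fun x => by ring
    rw [heq]
    exact ((integrable_const _).add intF1sq_1.1).add (intF1_1.const_mul _)
  have hS2 : (pairVar μ₁ μ₂).toReal ≤ (m + Real.sqrt V₁) ^ 2 := by
    have hmono : ∫ x, auxF μ₂ x ^ 2 ∂μ₁ ≤ ∫ x, (m + auxF μ₁ x) ^ 2 ∂μ₁ := by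
      refine integral_mono intF2sq_1.1 hexp_int fun x => ?_
      have h := hpoint x
      nlinarith [auxF_nonneg μ₂ x, auxF_nonneg μ₁ x]
    have hexp : ∫ x, (m + auxF μ₁ x) ^ 2 ∂μ₁
        = m ^ 2 + V₁ + 2 * m * ∫ x, auxF μ₁ x ∂μ₁ := by
      have heq : (fun x => (m + auxF μ₁ x) ^ 2)
          = fun x => (m ^ 2 + auxF μ₁ x ^ 2) + (2 * m) * auxF μ₁ x := funext fun x => by ring
      have ia1 : Integrable (fun x => m ^ 2 + auxF μ₁ x ^ 2) μ₁ :=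
        (integrable_const _).add intF1sq_1.1
      have ia2 : Integrable (fun x => (2 * m) * auxF μ₁ x) μ₁ := intF1_1.const_mul _
      rw [heq, integral_add ia1 ia2,
        integral_add (integrable_const _) intF1sq_1.1, integral_const, probReal_univ,
        integral_const_mul, hV₁eq, smul_eq_mul, one_mul]
    rw [← hSeq]
    have hsq : Real.sqrt V₁ ^ 2 = V₁ := Real.sq_sqrt ENNReal.toReal_nonneg
    have hmul : 2 * m * ∫ x, auxF μ₁ x ∂μ₁ ≤ 2 * m * Real.sqrt V₁ :=
      mul_le_mul_of_nonneg_left hCS1 (by linarith)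
    have hsq2 : (m + Real.sqrt V₁) ^ 2 = m ^ 2 + V₁ + 2 * m * Real.sqrt V₁ := by
      rw [add_sq, hsq]; ring
    linarith
  have hfinal : Real.sqrt (pairVar μ₁ μ₂).toReal ≤ W + Real.sqrt V₁ + Real.sqrt V₂ := by
    have h5 : Real.sqrt (pairVar μ₁ μ₂).toReal ≤ m + Real.sqrt V₁ := by
      calc Real.sqrt (pairVar μ₁ μ₂).toReal ≤ Real.sqrt ((m + Real.sqrt V₁) ^ 2) :=
            Real.sqrt_le_sqrt hS2
        _ = m + Real.sqrt V₁ := Real.sqrt_sq (by positivity)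
    linarith [htrunc, hCS2]
  -- convert back to ℝ≥0∞
  have hhalf : ∀ (a : ℝ≥0∞), a ≠ ⊤ → a ^ (1/2 : ℝ) = ENNReal.ofReal (Real.sqrt a.toReal) := by
    intro a ha
    rw [Real.sqrt_eq_rpow, ENNReal.toReal_rpow,
      ENNReal.ofReal_toReal (ENNReal.rpow_ne_top_of_nonneg (by norm_num) ha)]
  rw [hhalf _ h₁₂, hhalf _ h₁', hhalf _ h₂']
  calc ENNReal.ofReal (Real.sqrt (pairVar μ₁ μ₂).toReal)
      ≤ ENNReal.ofReal (W + Real.sqrt V₁ + Real.sqrt V₂) := ENNReal.ofReal_le_ofReal hfinal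
    _ = ENNReal.ofReal W + ENNReal.ofReal (Real.sqrt V₁) + ENNReal.ofReal (Real.sqrt V₂) := by
        rw [ENNReal.ofReal_add (by positivity) (Real.sqrt_nonneg _),
          ENNReal.ofReal_add hW0 (Real.sqrt_nonneg _)]
    _ = dW1 μ₁ μ₂ + ENNReal.ofReal (Real.sqrt V₁) + ENNReal.ofReal (Real.sqrt V₂) := by
        rw [hWdef, ENNReal.ofReal_toReal hW]
end

section
/- Let R : [t₀, T] → ℝ be differentiable with R'(t) ≥ (2/n) R(t)² and R(t₀) ≥ R_min, where R_min < 0 and n > 0. Then for all t ∈ [t₀, T], R(t) ≥ (n/2)·R_min / (n/2 − R_min (t − t₀)). -/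
/-- ODE comparison for the lower scalar curvature bound: if `R' ≥ (2/n) R²` on `[t₀,T]`
and `R(t₀) ≥ R_min` with `R_min < 0`, `n > 0`, then
`R(t) ≥ (n/2) R_min / (n/2 − R_min (t − t₀))` on `[t₀,T]`. -/
theorem scalar_ode_lower_bound (n Rmin t₀ T : ℝ) (hn : 0 < n) (hRmin : Rmin < 0)
    (R R' : ℝ → ℝ)
    (hderiv : ∀ t ∈ Set.Icc t₀ T, HasDerivAt R (R' t) t)
    (hode : ∀ t ∈ Set.Icc t₀ T, (2 / n) * (R t) ^ 2 ≤ R' t)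
    (hinit : Rmin ≤ R t₀) :
    ∀ t ∈ Set.Icc t₀ T, (n / 2) * Rmin / (n / 2 - Rmin * (t - t₀)) ≤ R t := by
  set d : ℝ → ℝ := fun s => n / 2 - Rmin * (s - t₀) with hd_def
  have hdpos : ∀ s ∈ Set.Icc t₀ T, 0 < d s := by
    intro s hs
    have h1 : 0 ≤ -Rmin * (s - t₀) := mul_nonneg (by linarith) (by linarith [hs.1])
    simp only [hd_def]
    nlinarith
  set B : ℝ → ℝ := fun s => -(n / 2 * Rmin / d s) with hB_def
  set B' : ℝ → ℝ := fun s => -(n / 2 * Rmin ^ 2 / (d s) ^ 2) with hB'_def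
  have hBderiv : ∀ s ∈ Set.Icc t₀ T, HasDerivAt B (B' s) s := by
    intro s hs
    have hds : d s ≠ 0 := (hdpos s hs).ne'
    have hd' : HasDerivAt d (-Rmin) s := by
      simpa using ((hasDerivAt_id s).sub_const t₀).const_mul Rmin |>.const_sub (n / 2)
    have hinv : HasDerivAt (fun t => (d t)⁻¹) (-(-Rmin) / (d s) ^ 2) s := hd'.inv hds
    have h2 : HasDerivAt (fun t => n / 2 * Rmin * (d t)⁻¹)
        (n / 2 * Rmin * (-(-Rmin) / (d s) ^ 2)) s := hinv.const_mul _
    have h3 := h2.neg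
    have heq : -(n / 2 * Rmin * (-(-Rmin) / (d s) ^ 2)) = B' s := by
      simp only [hB'_def]; ring
    rw [heq] at h3
    have hBeq : B = fun t => -(n / 2 * Rmin * (d t)⁻¹) := by
      funext t; simp only [hB_def]; ring
    rw [hBeq]; exact h3
  have hfc : ContinuousOn (fun s => -R s) (Set.Icc t₀ T) :=
    fun s hs => ((hderiv s hs).continuousAt.continuousWithinAt).neg
  -- ε-perturbed barrier
  have key : ∀ ε > 0, ∀ x ∈ Set.Icc t₀ T, -R x ≤ B x + ε * (x - t₀ + 1) := by
    intro ε hε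
    set Bε : ℝ → ℝ := fun s => B s + ε * (s - t₀ + 1) with hBε_def
    set Bε' : ℝ → ℝ := fun s => B' s + ε with hBε'_def
    have hBεderiv : ∀ s ∈ Set.Icc t₀ T, HasDerivAt Bε (Bε' s) s := by
      intro s hs
      have : HasDerivAt (fun t => ε * (t - t₀ + 1)) ε s := by
        simpa using (((hasDerivAt_id s).sub_const t₀).add_const 1).const_mul ε
      exact (hBderiv s hs).add this
    have := image_le_of_deriv_right_lt_deriv_boundary'
      (f := fun s => -R s) (f' := fun s => -R' s) (a := t₀) (b := T)
      (B := Bε) (B' := Bε') hfc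
      (fun x hx => ((hderiv x (Set.mem_Icc_of_Ico hx)).neg).hasDerivWithinAt)
      ?_ (fun s hs => (hBεderiv s hs).continuousAt.continuousWithinAt)
      (fun x hx => (hBεderiv x (Set.mem_Icc_of_Ico hx)).hasDerivWithinAt) ?_
    · exact fun x hx => this hx
    · -- initial condition
      have hd0 : d t₀ = n / 2 := by simp [hd_def]
      have hB0 : B t₀ = -Rmin := by
        simp only [hB_def, hd0]
        field_simp
      simp only [hBε_def, hB0]
      nlinarith
    · -- strict bound at contact points
      intro x hx hfb
      have hx' := Set.mem_Icc_of_Ico hx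
      have hode' := hode x hx'
      have hdx := hdpos x hx'
      set φ : ℝ := n / 2 * Rmin / d x with hφ_def
      have hφneg : φ < 0 := div_neg_of_neg_of_pos (by nlinarith) hdx
      have hm : (1 : ℝ) ≤ x - t₀ + 1 := by linarith [hx.1]
      have hR : R x = φ - ε * (x - t₀ + 1) := by
        simp only [hBε_def, hB_def] at hfb
        simp only [hφ_def]
        linarith
      have hsq : (2 / n) * φ ^ 2 = n / 2 * Rmin ^ 2 / (d x) ^ 2 := by
        simp only [hφ_def]
        field_simp
      have hninv : (0 : ℝ) < 2 / n := by positivity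
      have hstep : (2 / n) * φ ^ 2 - ε < (2 / n) * (R x) ^ 2 := by
        rw [hR]
        have h1 : 0 ≤ 2 / n * (ε * (x - t₀ + 1)) ^ 2 := by positivity
        have h2 : 0 ≤ 2 / n * (ε * (x - t₀ + 1) * (-φ)) := by
          apply mul_nonneg hninv.le
          exact mul_nonneg (mul_nonneg hε.le (by linarith)) (by linarith)
        nlinarith [h1, h2]
      simp only [hBε'_def, hB'_def]
      rw [← hsq]
      linarith
  intro t ht
  have hfin : -R t ≤ B t := by
    refine le_of_forall_pos_le_add fun δ hδ => ?_
    have hmpos : (0 : ℝ) < t - t₀ + 1 := by linarith [ht.1]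
    have h := key (δ / (t - t₀ + 1)) (div_pos hδ hmpos) t ht
    rw [div_mul_cancel₀ _ hmpos.ne'] at h
    exact h
  simp only [hB_def] at hfin
  linarith
end

section
/- Let H : [0,1] → ℝ and F : [0,1] → ℝ be C² functions with H'' ≤ 0, F'' ≤ 0, F ≥ 0, H ≤ F on (0,1), and H(0) = H(1) = F(0) = F(1) = 0. Then ∫₀¹ (H'(a))² da ≤ ∫₀¹ (F'(a))² da. -/
open MeasureTheory

/-- Variational comparison: if `H, F` are C² on `[0,1]` (with derivatives `H', H''` resp.
`F', F''` on `[0,1]`), concave (`H'' ≤ 0`, `F'' ≤ 0`), `F ≥ 0`, `H ≤ F` on `(0,1)`, and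
`H(0) = H(1) = F(0) = F(1) = 0`, then `∫₀¹ (H')² ≤ ∫₀¹ (F')²`. -/
theorem dirichlet_energy_comparison (H F H' F' H'' F'' : ℝ → ℝ)
    (hHd : ∀ a ∈ Set.Icc (0 : ℝ) 1, HasDerivWithinAt H (H' a) (Set.Icc 0 1) a)
    (hHd2 : ∀ a ∈ Set.Icc (0 : ℝ) 1, HasDerivWithinAt H' (H'' a) (Set.Icc 0 1) a)
    (hFd : ∀ a ∈ Set.Icc (0 : ℝ) 1, HasDerivWithinAt F (F' a) (Set.Icc 0 1) a)
    (hFd2 : ∀ a ∈ Set.Icc (0 : ℝ) 1, HasDerivWithinAt F' (F'' a) (Set.Icc 0 1) a)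
    (hHcont : ContinuousOn H'' (Set.Icc 0 1)) (hFcont : ContinuousOn F'' (Set.Icc 0 1))
    (hHconc : ∀ a ∈ Set.Icc (0 : ℝ) 1, H'' a ≤ 0)
    (hFconc : ∀ a ∈ Set.Icc (0 : ℝ) 1, F'' a ≤ 0)
    (hFpos : ∀ a ∈ Set.Icc (0 : ℝ) 1, 0 ≤ F a)
    (hHF : ∀ a ∈ Set.Ioo (0 : ℝ) 1, H a ≤ F a)
    (hH0 : H 0 = 0) (hH1 : H 1 = 0) (hF0 : F 0 = 0) (hF1 : F 1 = 0) :
    ∫ a in Set.Icc (0 : ℝ) 1, (H' a) ^ 2 ≤ ∫ a in Set.Icc (0 : ℝ) 1, (F' a) ^ 2 := by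
  have hI : Set.uIcc (0 : ℝ) 1 = Set.Icc 0 1 := Set.uIcc_of_le zero_le_one
  -- continuity facts
  have hHc : ContinuousOn H (Set.Icc (0:ℝ) 1) := fun a ha => (hHd a ha).continuousWithinAt
  have hFc : ContinuousOn F (Set.Icc (0:ℝ) 1) := fun a ha => (hFd a ha).continuousWithinAt
  have hH'c : ContinuousOn H' (Set.Icc (0:ℝ) 1) := fun a ha => (hHd2 a ha).continuousWithinAt
  have hF'c : ContinuousOn F' (Set.Icc (0:ℝ) 1) := fun a ha => (hFd2 a ha).continuousWithinAt
  -- F - H ≥ 0 on Icc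
  have hFH : ∀ a ∈ Set.Icc (0:ℝ) 1, 0 ≤ F a - H a := by
    intro a ha
    rcases eq_or_ne a 0 with rfl | h0
    · simp [hF0, hH0]
    rcases eq_or_ne a 1 with rfl | h1
    · simp [hF1, hH1]
    have : a ∈ Set.Ioo (0:ℝ) 1 := ⟨lt_of_le_of_ne ha.1 (Ne.symm h0), lt_of_le_of_ne ha.2 h1⟩
    linarith [hHF a this]
  -- FTC: ∫ (H''*(F-H) + H'*(F'-H')) = [H'*(F-H)]₀¹ = 0
  set g : ℝ → ℝ := fun a => H'' a * (F a - H a) + H' a * (F' a - H' a) with hg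
  have hgc : ContinuousOn g (Set.Icc (0:ℝ) 1) :=
    (hHcont.mul (hFc.sub hHc)).add (hH'c.mul (hF'c.sub hH'c))
  have hgint : IntervalIntegrable g volume 0 1 := (hgc.mono (by rw [hI])).intervalIntegrable
  have hFTC : ∫ x in (0:ℝ)..1, g x = 0 := by
    have := intervalIntegral.integral_eq_sub_of_hasDeriv_right_of_le zero_le_one
      (f := fun a => H' a * (F a - H a)) (f' := g)
      (hH'c.mul (hFc.sub hHc))
      (by
        intro x hx
        have hx' : x ∈ Set.Icc (0:ℝ) 1 := Set.Ioo_subset_Icc_self hx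
        have hmem : Set.Icc (0:ℝ) 1 ∈ nhds x := Icc_mem_nhds hx.1 hx.2
        have h1 : HasDerivAt H' (H'' x) x := (hHd2 x hx').hasDerivAt hmem
        have h2 : HasDerivAt (fun a => F a - H a) (F' x - H' x) x :=
          ((hFd x hx').hasDerivAt hmem).sub ((hHd x hx').hasDerivAt hmem)
        exact (h1.mul h2).hasDerivWithinAt)
      hgint
    simpa [hF0, hH0, hF1, hH1] using this
  have hsplit : IntervalIntegrable (fun a => H'' a * (F a - H a)) volume 0 1 :=
    ((hHcont.mul (hFc.sub hHc)).mono (by rw [hI])).intervalIntegrable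
  have hsplit2 : IntervalIntegrable (fun a => H' a * (F' a - H' a)) volume 0 1 :=
    ((hH'c.mul (hF'c.sub hH'c)).mono (by rw [hI])).intervalIntegrable
  have hkey : 0 ≤ ∫ x in (0:ℝ)..1, H' x * (F' x - H' x) := by
    have h1 : ∫ x in (0:ℝ)..1, g x =
        (∫ x in (0:ℝ)..1, H'' x * (F x - H x)) + ∫ x in (0:ℝ)..1, H' x * (F' x - H' x) :=
      intervalIntegral.integral_add hsplit hsplit2
    have h2' : (∫ x in (0:ℝ)..1, H'' x * (F x - H x)) ≤ 0 := by
      rw [intervalIntegral.integral_of_le zero_le_one]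
      have : ∀ᵐ x ∂(volume.restrict (Set.Ioc (0:ℝ) 1)), H'' x * (F x - H x) ≤ 0 := by
        filter_upwards [ae_restrict_mem measurableSet_Ioc] with x hx
        exact mul_nonpos_of_nonpos_of_nonneg (hHconc x (Set.Ioc_subset_Icc_self hx))
          (hFH x (Set.Ioc_subset_Icc_self hx))
      exact integral_nonpos_of_ae this
    linarith [hFTC, h1, h2']
  -- convert set integrals to interval integrals
  have hconv : ∀ (u : ℝ → ℝ), (∫ a in Set.Icc (0:ℝ) 1, u a) = ∫ x in (0:ℝ)..1, u x := by
    intro u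
    rw [MeasureTheory.integral_Icc_eq_integral_Ioc, intervalIntegral.integral_of_le zero_le_one]
  rw [hconv, hconv]
  -- ∫ F'² - ∫ H'² = ∫ (F'-H')² + 2 ∫ H'(F'-H') ≥ 0
  have hint1 : IntervalIntegrable (fun a => (F' a - H' a)^2) volume 0 1 :=
    (((hF'c.sub hH'c).pow 2).mono (by rw [hI])).intervalIntegrable
  have hintH2 : IntervalIntegrable (fun a => (H' a)^2) volume 0 1 :=
    ((hH'c.pow 2).mono (by rw [hI])).intervalIntegrable
  have hintF2 : IntervalIntegrable (fun a => (F' a)^2) volume 0 1 :=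
    ((hF'c.pow 2).mono (by rw [hI])).intervalIntegrable
  have hsq : 0 ≤ ∫ x in (0:ℝ)..1, (F' x - H' x)^2 := by
    rw [intervalIntegral.integral_of_le zero_le_one]
    exact integral_nonneg fun x => sq_nonneg _
  have hdecomp : (∫ x in (0:ℝ)..1, (F' x)^2) =
      (∫ x in (0:ℝ)..1, (H' x)^2) + (∫ x in (0:ℝ)..1, (F' x - H' x)^2)
        + 2 * ∫ x in (0:ℝ)..1, H' x * (F' x - H' x) := by
    have : (∫ x in (0:ℝ)..1, (F' x)^2) =
        ∫ x in (0:ℝ)..1, ((H' x)^2 + (F' x - H' x)^2 + 2 * (H' x * (F' x - H' x))) := by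
      apply intervalIntegral.integral_congr
      intro x _
      ring
    rw [this, intervalIntegral.integral_add (hintH2.add hint1) (hsplit2.const_mul 2),
      intervalIntegral.integral_add hintH2 hint1, intervalIntegral.integral_const_mul]
  linarith
end

section
/- If (x₁,t₁) ∈ P*(x₂,t₂;A,−T⁻,T⁺) (in the abstract setting below), then (x₂,t₂) ∈ P*(x₁,t₁;A,−(T⁻+T⁺),T⁻), and moreover P*(x₂,t₂;A,−T⁻,T⁺) ⊂ P*(x₁,t₁;2A,−(T⁻+T⁺),T⁻+T⁺). -/
/-- The abstract `P*`-parabolic neighborhood `P*(x₀,t₀;A,−T⁻,T⁺)`: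
all points `(x,t)` with `t ∈ I`, `t₀ − T⁻ ≤ t ≤ t₀ + T⁺` and
`d_{W₁}^{t₀−T⁻}(ν_{x₀,t₀;t₀−T⁻}, ν_{x,t;t₀−T⁻}) < A`. -/
def Pstar {M S : Type*} (I : Set ℝ) (ν : M → ℝ → ℝ → S) (dW : ℝ → S → S → ℝ)
    (x₀ : M) (t₀ A Tm Tp : ℝ) : Set (M × ℝ) :=
  {p | p.2 ∈ I ∧ t₀ - Tm ≤ p.2 ∧ p.2 ≤ t₀ + Tp ∧
    dW (t₀ - Tm) (ν x₀ t₀ (t₀ - Tm)) (ν p.1 p.2 (t₀ - Tm)) < A}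

/-- Symmetry-type containment: if `(x₁,t₁) ∈ P*(x₂,t₂;A,−T⁻,T⁺)`, then
`(x₂,t₂) ∈ P*(x₁,t₁;A,−(T⁻+T⁺),T⁻)` and
`P*(x₂,t₂;A,−T⁻,T⁺) ⊆ P*(x₁,t₁;2A,−(T⁻+T⁺),T⁻+T⁺)`, in the abstract setting of
conjugate-heat-kernel measures whose `W₁`-distance is monotone going backwards in time. -/
theorem Pstar_symmetric_containment {M S : Type*} (I : Set ℝ) (ν : M → ℝ → ℝ → S)
    (dW : ℝ → S → S → ℝ) (δ : M → S)
    (htri : ∀ s ∈ I, ∀ a b c : S, dW s a c ≤ dW s a b + dW s b c)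
    (hsymm : ∀ s ∈ I, ∀ a b : S, dW s a b = dW s b a)
    (hmono : ∀ (x₁ : M) (t₁ : ℝ) (x₂ : M) (t₂ : ℝ), t₁ ∈ I → t₂ ∈ I →
      ∀ s₁ ∈ I, ∀ s₂ ∈ I, s₁ ≤ s₂ → s₂ ≤ t₁ → s₂ ≤ t₂ →
        dW s₁ (ν x₁ t₁ s₁) (ν x₂ t₂ s₁) ≤ dW s₂ (ν x₁ t₁ s₂) (ν x₂ t₂ s₂))
    (hdelta : ∀ x t, t ∈ I → ν x t t = δ x)
    (x₁ x₂ : M) (t₁ t₂ A Tm Tp : ℝ)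
    (hA : 0 ≤ A) (hTm : 0 ≤ Tm) (hTp : 0 ≤ Tp)
    (ht₂ : t₂ ∈ I) (hI₁ : t₂ - Tm ∈ I) (hI₂ : t₁ - (Tm + Tp) ∈ I)
    (hmem : (x₁, t₁) ∈ Pstar I ν dW x₂ t₂ A Tm Tp) :
    (x₂, t₂) ∈ Pstar I ν dW x₁ t₁ A (Tm + Tp) Tm ∧
      Pstar I ν dW x₂ t₂ A Tm Tp ⊆ Pstar I ν dW x₁ t₁ (2 * A) (Tm + Tp) (Tm + Tp) := by
  obtain ⟨ht₁, hl, hu, hd⟩ := hmem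
  have hs12 : t₁ - (Tm + Tp) ≤ t₂ - Tm := by linarith
  have hmono1 : dW (t₁ - (Tm + Tp)) (ν x₁ t₁ (t₁ - (Tm + Tp))) (ν x₂ t₂ (t₁ - (Tm + Tp))) ≤
      dW (t₂ - Tm) (ν x₁ t₁ (t₂ - Tm)) (ν x₂ t₂ (t₂ - Tm)) :=
    hmono x₁ t₁ x₂ t₂ ht₁ ht₂ _ hI₂ _ hI₁ hs12 hl (by linarith)
  have hsym1 : dW (t₂ - Tm) (ν x₁ t₁ (t₂ - Tm)) (ν x₂ t₂ (t₂ - Tm)) < A := by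
    rw [hsymm _ hI₁]; exact hd
  refine ⟨⟨ht₂, by linarith, by linarith, lt_of_le_of_lt hmono1 hsym1⟩, ?_⟩
  rintro ⟨x, t⟩ ⟨ht, hl', hu', hd'⟩
  refine ⟨ht, by linarith, by linarith, ?_⟩
  have hmono2 : dW (t₁ - (Tm + Tp)) (ν x₁ t₁ (t₁ - (Tm + Tp))) (ν x t (t₁ - (Tm + Tp))) ≤
      dW (t₂ - Tm) (ν x₁ t₁ (t₂ - Tm)) (ν x t (t₂ - Tm)) :=
    hmono x₁ t₁ x t ht₁ ht _ hI₂ _ hI₁ hs12 hl hl'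
  have htr := htri _ hI₁ (ν x₁ t₁ (t₂ - Tm)) (ν x₂ t₂ (t₂ - Tm)) (ν x t (t₂ - Tm))
  calc dW (t₁ - (Tm + Tp)) (ν x₁ t₁ (t₁ - (Tm + Tp))) (ν x t (t₁ - (Tm + Tp))) ≤
      dW (t₂ - Tm) (ν x₁ t₁ (t₂ - Tm)) (ν x t (t₂ - Tm)) := hmono2
    _ ≤ _ + _ := htr
    _ < 2 * A := by linarith
end
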